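/- Let X and Y be locally compact Hausdorff spaces and p : Y → X a continuous surjection. Let φ : C₀(Y) → C₀(X) be a positive C₀(X)-functional, i.e. a linear map such that φ(z) ≥ 0 whenever z ≥ 0 and φ((f∘p)·z) = f·φ(z) for all f ∈ C₀(X) and z ∈ C₀(Y). Then for every x ∈ X there exists a unique positive linear functional φ_x : C₀(p⁻¹{x}) → ℂ such that (φ(z))(x) = φ_x(z|_{p⁻¹{x}}) for every z ∈ C₀(Y). -/

import Mathlib

open scoped ZeroAtInfty ComplexOrder

open Filter Topology OnePoint

/-- Post-composition with a continuous map fixing `0`. -/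
noncomputable def mapZero {Y : Type} [TopologicalSpace Y] (g : ℂ → ℂ) (hg : Continuous g) (h0 : g 0 = 0)
    (z : C₀(Y, ℂ)) : C₀(Y, ℂ) where
  toFun := fun y => g (z y)
  continuous_toFun := hg.comp (map_continuous z)
  zero_at_infty' := by
    have : Filter.Tendsto g (𝓝 0) (𝓝 0) := by simpa [h0] using hg.tendsto 0
    exact this.comp (zero_at_infty z)

@[simp] lemma mapZero_apply {Y : Type} [TopologicalSpace Y] (g : ℂ → ℂ) (hg : Continuous g)
    (h0 : g 0 = 0) (z : C₀(Y, ℂ)) (y : Y) : mapZero g hg h0 z y = g (z y) := rfl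

/-- Tietze-type extension for `C₀` functions on a closed subset of a locally compact
Hausdorff space. -/
lemma c0_extend {Y : Type} [TopologicalSpace Y] [T2Space Y] [LocallyCompactSpace Y]
    {F : Set Y} (hF : IsClosed F) (ζ : C₀(F, ℂ)) :
    ∃ z : C₀(Y, ℂ), ∀ y : F, z y.1 = ζ y := by
  -- the closed embedding `F → Y` induces a closed embedding of one-point compactifications
  have hval : IsClosedEmbedding (Subtype.val : F → Y) := hF.isClosedEmbedding_subtypeVal
  have hcc : Tendsto (Subtype.val : F → Y) (coclosedCompact F) (coclosedCompact Y) := by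
    rw [coclosedCompact_eq_cocompact, coclosedCompact_eq_cocompact]
    exact hval.tendsto_cocompact
  let q : OnePoint F → OnePoint Y := OnePoint.map Subtype.val
  have hq : Continuous q := OnePoint.continuous_map hval.continuous hcc
  have hqinj : Function.Injective q := Option.map_injective Subtype.val_injective
  have hqce : IsClosedEmbedding q := hq.isClosedEmbedding hqinj
  -- lift `ζ` to the one-point compactification of `F`
  have hζt : Tendsto (ζ : F → ℂ) (coclosedCompact F) (𝓝 0) := by
    rw [coclosedCompact_eq_cocompact]; exact zero_at_infty ζ
  let zinf : C(OnePoint F, ℂ) := OnePoint.continuousMapMk ⟨(ζ : F → ℂ), map_continuous ζ⟩ 0 hζt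
  obtain ⟨g, hg⟩ := zinf.exists_extension (e := q) hqce
  have hg' : ∀ o : OnePoint F, g (q o) = zinf o := fun o => DFunLike.congr_fun hg o
  have hginf : g ∞ = 0 := hg' ∞
  refine ⟨⟨⟨fun y => g y, g.continuous.comp OnePoint.continuous_coe⟩, ?_⟩, ?_⟩
  · have h1 : Tendsto ((↑) : Y → OnePoint Y) (cocompact Y) (𝓝 ∞) := by
      rw [← coclosedCompact_eq_cocompact]; exact OnePoint.tendsto_coe_infty
    have := (g.continuous.tendsto ∞).comp h1
    rwa [hginf] at this
  · intro y
    have := hg' (y : OnePoint F)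
    exact this

/-- Key lemma: if a nonnegative `z ∈ C₀(Y)` vanishes on the fibre over `x`, then `(φ z) x = 0`. -/
lemma key_nonneg {X Y : Type} [TopologicalSpace X] [T2Space X] [LocallyCompactSpace X]
    [TopologicalSpace Y] [T2Space Y] [LocallyCompactSpace Y]
    (p : Y → X) (hp : Continuous p)
    (φ : C₀(Y, ℂ) →ₗ[ℂ] C₀(X, ℂ))
    (hpos : ∀ z : C₀(Y, ℂ), (∀ y, 0 ≤ z y) → ∀ x, 0 ≤ φ z x)
    (hmod : ∀ (f : C₀(X, ℂ)) (z w : C₀(Y, ℂ)),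
      (∀ y, w y = f (p y) * z y) → ∀ x, φ w x = f x * φ z x)
    (x : X) (z : C₀(Y, ℂ)) (hz0 : ∀ y, 0 ≤ z y) (hzF : ∀ y, p y = x → z y = 0) :
    φ z x = 0 := by
  have hre : ∀ y, 0 ≤ (z y).re ∧ (z y).im = 0 := by
    intro y
    have := hz0 y
    rw [Complex.le_def] at this
    simpa using ⟨this.1, this.2.symm⟩
  -- the square root of `z`
  set sq : C₀(Y, ℂ) := mapZero (fun w => (Real.sqrt w.re : ℂ))
    (Complex.continuous_ofReal.comp (Real.continuous_sqrt.comp Complex.continuous_re))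
    (by simp) z with hsq
  have hsq0 : ∀ y, 0 ≤ sq y := fun y => by
    simp [hsq, Complex.zero_le_real, Real.sqrt_nonneg]
  have hC : 0 ≤ (φ sq x).re := by
    have := hpos sq hsq0 x
    rw [Complex.le_def] at this
    simpa using this.1
  set C := (φ sq x).re
  have hzx : 0 ≤ φ z x := hpos z hz0 x
  have main : ∀ ε : ℝ, 0 < ε → (φ z x).re ≤ Real.sqrt ε * C := by
    intro ε hε
    -- truncation
    set mε : C₀(Y, ℂ) := mapZero (fun w => ((min w.re ε : ℝ) : ℂ))
      (Complex.continuous_ofReal.comp ((Complex.continuous_re).min continuous_const))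
      (by simp [min_eq_left hε.le]) z with hmε
    set zr : C₀(Y, ℂ) := z - mε with hzr
    -- the set where `z` is large is compact
    have h1 : ∀ᶠ y in Filter.cocompact Y, dist (z y) 0 < ε :=
      Metric.tendsto_nhds.mp (zero_at_infty z) ε hε
    obtain ⟨K, hK, hKs⟩ := Filter.mem_cocompact.mp h1
    set t : Set Y := {y | ε ≤ ‖z y‖} with hts
    have htc : IsClosed t := isClosed_le continuous_const ((map_continuous z).norm)
    have htK : t ⊆ K := by
      intro y hy
      by_contra hyK
      have := hKs hyK
      simp only [Set.mem_setOf_eq, dist_zero_right] at this hy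
      exact absurd hy (not_le.mpr this)
    have ht : IsCompact t := hK.of_isClosed_subset htc htK
    have hxt : x ∉ p '' t := by
      rintro ⟨y, hy, rfl⟩
      have h0 := hzF y rfl
      simp only [hts, Set.mem_setOf_eq, h0, norm_zero] at hy
      exact absurd hy (not_le.mpr hε)
    obtain ⟨f₀, hf1, hf0, hfc, hf01⟩ := exists_continuous_one_zero_of_isCompact
      (ht.image hp) isClosed_singleton (Set.disjoint_singleton_right.mpr hxt)
    set f : C₀(X, ℂ) := ⟨⟨fun x' => (f₀ x' : ℂ), Complex.continuous_ofReal.comp f₀.continuous⟩,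
      by simpa [Function.comp_def] using (Complex.continuous_ofReal.tendsto 0).comp hfc.is_zero_at_infty⟩ with hf
    have hzr_eq : ∀ y, zr y = f (p y) * zr y := by
      intro y
      by_cases hy : ε ≤ ‖z y‖
      · have : f₀ (p y) = 1 := hf1 ⟨y, hy, rfl⟩
        simp [hf, hzr, this]
      · have hrey : (z y).re < ε :=
          lt_of_le_of_lt (Complex.re_le_norm _) (by rwa [not_le] at hy)
        have hz0' : zr y = 0 := by
          simp only [hzr, ZeroAtInftyContinuousMap.sub_apply, hmε, mapZero_apply]
          rw [min_eq_left hrey.le]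
          apply Complex.ext <;> simp [(hre y).2]
        simp [hz0']
    have hφzr : φ zr x = 0 := by
      have := hmod f zr zr hzr_eq x
      have hfx : f x = 0 := by
        have := hf0 (Set.mem_singleton x)
        simp [hf, Complex.ofReal_eq_zero] at this ⊢
        simpa using this
      rw [hfx, zero_mul] at this
      exact this
    have hsplit : φ z x = φ mε x := by
      have : z = zr + mε := by
        ext y
        simp [hzr]
      rw [this, map_add]
      simp [hφzr]
    -- estimate `mε ≤ √ε • sq`
    have hu : ∀ y, 0 ≤ ((Real.sqrt ε : ℂ) • sq - mε) y := by
      intro y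
      simp only [ZeroAtInftyContinuousMap.sub_apply, ZeroAtInftyContinuousMap.smul_apply,
        hmε, hsq, mapZero_apply, smul_eq_mul]
      rw [← Complex.ofReal_mul, ← Complex.ofReal_sub, Complex.zero_le_real, sub_nonneg]
      rcases le_total ((z y).re) ε with h | h
      · rw [min_eq_left h]
        calc (z y).re = Real.sqrt (z y).re * Real.sqrt (z y).re :=
              (Real.mul_self_sqrt (hre y).1).symm
          _ ≤ Real.sqrt ε * Real.sqrt (z y).re :=
              mul_le_mul_of_nonneg_right (Real.sqrt_le_sqrt h) (Real.sqrt_nonneg _)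
      · rw [min_eq_right h]
        calc ε = Real.sqrt ε * Real.sqrt ε := (Real.mul_self_sqrt hε.le).symm
          _ ≤ Real.sqrt ε * Real.sqrt (z y).re :=
              mul_le_mul_of_nonneg_left (Real.sqrt_le_sqrt h) (Real.sqrt_nonneg _)
    have hub := hpos _ hu x
    rw [map_sub, _root_.map_smul] at hub
    simp only [ZeroAtInftyContinuousMap.sub_apply, ZeroAtInftyContinuousMap.smul_apply,
      smul_eq_mul, sub_nonneg] at hub
    rw [Complex.le_def] at hub
    have : (φ mε x).re ≤ Real.sqrt ε * C := by
      have := hub.1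
      simpa [Complex.mul_re] using this
    rw [hsplit]
    exact this
  -- conclude
  have him : (φ z x).im = 0 := by
    rw [Complex.le_def] at hzx; simpa using hzx.2.symm
  have hge : 0 ≤ (φ z x).re := by rw [Complex.le_def] at hzx; simpa using hzx.1
  have hle : (φ z x).re ≤ 0 := by
    by_contra h
    push_neg at h
    set c := (φ z x).re
    have hC1 : (0:ℝ) < C + 1 := by linarith
    have hεpos : (0:ℝ) < (c / (C + 1)) ^ 2 := by positivity
    have hmain := main _ hεpos
    rw [Real.sqrt_sq (by positivity)] at hmain
    rw [div_mul_eq_mul_div, le_div_iff₀ hC1] at hmain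
    nlinarith
  exact Complex.ext (le_antisymm hle hge) him

/-- If `z ∈ C₀(Y)` vanishes on the fibre over `x`, then `(φ z) x = 0`. -/
lemma key_vanish {X Y : Type} [TopologicalSpace X] [T2Space X] [LocallyCompactSpace X]
    [TopologicalSpace Y] [T2Space Y] [LocallyCompactSpace Y]
    (p : Y → X) (hp : Continuous p)
    (φ : C₀(Y, ℂ) →ₗ[ℂ] C₀(X, ℂ))
    (hpos : ∀ z : C₀(Y, ℂ), (∀ y, 0 ≤ z y) → ∀ x, 0 ≤ φ z x)
    (hmod : ∀ (f : C₀(X, ℂ)) (z w : C₀(Y, ℂ)),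
      (∀ y, w y = f (p y) * z y) → ∀ x, φ w x = f x * φ z x)
    (x : X) (z : C₀(Y, ℂ)) (hzF : ∀ y, p y = x → z y = 0) :
    φ z x = 0 := by
  set g₁ : ℂ → ℂ := fun w => ((max w.re 0 : ℝ) : ℂ) with hg₁
  set g₂ : ℂ → ℂ := fun w => ((max (-w.re) 0 : ℝ) : ℂ) with hg₂
  set g₃ : ℂ → ℂ := fun w => ((max w.im 0 : ℝ) : ℂ) with hg₃
  set g₄ : ℂ → ℂ := fun w => ((max (-w.im) 0 : ℝ) : ℂ) with hg₄
  have hc₁ : Continuous g₁ := Complex.continuous_ofReal.comp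
    (Complex.continuous_re.max continuous_const)
  have hc₂ : Continuous g₂ := Complex.continuous_ofReal.comp
    ((Complex.continuous_re.neg).max continuous_const)
  have hc₃ : Continuous g₃ := Complex.continuous_ofReal.comp
    (Complex.continuous_im.max continuous_const)
  have hc₄ : Continuous g₄ := Complex.continuous_ofReal.comp
    ((Complex.continuous_im.neg).max continuous_const)
  set z₁ := mapZero g₁ hc₁ (by simp [hg₁]) z with hz₁
  set z₂ := mapZero g₂ hc₂ (by simp [hg₂]) z with hz₂
  set z₃ := mapZero g₃ hc₃ (by simp [hg₃]) z with hz₃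
  set z₄ := mapZero g₄ hc₄ (by simp [hg₄]) z with hz₄
  have hdecomp : z = z₁ - z₂ + Complex.I • (z₃ - z₄) := by
    ext y
    simp only [ZeroAtInftyContinuousMap.add_apply, ZeroAtInftyContinuousMap.sub_apply,
      ZeroAtInftyContinuousMap.smul_apply, hz₁, hz₂, hz₃, hz₄, mapZero_apply, hg₁, hg₂, hg₃, hg₄,
      smul_eq_mul]
    apply Complex.ext <;>
      simp [Complex.add_re, Complex.sub_re, Complex.mul_re, Complex.mul_im,
        max_zero_sub_max_neg_zero_eq_self]
  have key : ∀ (g : ℂ → ℂ) (hc : Continuous g) (h0 : g 0 = 0),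
      (∀ w, 0 ≤ (g w).re) → (∀ w, (g w).im = 0) → φ (mapZero g hc h0 z) x = 0 := by
    intro g hc h0 hgre hgim
    apply key_nonneg p hp φ hpos hmod x
    · intro y
      rw [Complex.le_def]
      exact ⟨by simpa using hgre (z y), by simpa using (hgim (z y)).symm⟩
    · intro y hy
      simp [mapZero_apply, hzF y hy, h0]
  have k₁ : φ z₁ x = 0 := key g₁ hc₁ (by simp [hg₁]) (fun w => by simp [hg₁, le_max_right])
    (fun w => by simp [hg₁])
  have k₂ : φ z₂ x = 0 := key g₂ hc₂ (by simp [hg₂]) (fun w => by simp [hg₂, le_max_right])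
    (fun w => by simp [hg₂])
  have k₃ : φ z₃ x = 0 := key g₃ hc₃ (by simp [hg₃]) (fun w => by simp [hg₃, le_max_right])
    (fun w => by simp [hg₃])
  have k₄ : φ z₄ x = 0 := key g₄ hc₄ (by simp [hg₄]) (fun w => by simp [hg₄, le_max_right])
    (fun w => by simp [hg₄])
  rw [hdecomp, map_add, map_sub, _root_.map_smul, map_sub]
  simp [k₁, k₂, k₃, k₄]

/-- Let `X`, `Y` be locally compact Hausdorff spaces and `p : Y → X` a
continuous surjection.  Let `φ : C₀(Y) → C₀(X)` be a positive `C₀(X)`-functional, i.e. a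
linear map which is positive and satisfies `φ((f ∘ p) · z) = f · φ(z)`.  Then for every
`x ∈ X` there is a unique positive linear functional `φₓ : C₀(p⁻¹{x}) → ℂ` with
`(φ z) x = φₓ (z|_{p⁻¹{x}})` for every `z ∈ C₀(Y)`. -/
theorem stmt0 {X Y : Type} [TopologicalSpace X] [T2Space X] [LocallyCompactSpace X]
    [TopologicalSpace Y] [T2Space Y] [LocallyCompactSpace Y]
    (p : Y → X) (hp : Continuous p) (hps : Function.Surjective p)
    (φ : C₀(Y, ℂ) →ₗ[ℂ] C₀(X, ℂ))
    (hpos : ∀ z : C₀(Y, ℂ), (∀ y, 0 ≤ z y) → ∀ x, 0 ≤ φ z x)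
    (hmod : ∀ (f : C₀(X, ℂ)) (z w : C₀(Y, ℂ)),
      (∀ y, w y = f (p y) * z y) → ∀ x, φ w x = f x * φ z x)
    (x : X) :
    ∃! φx : C₀({y : Y // p y = x}, ℂ) →ₗ[ℂ] ℂ,
      (∀ ζ : C₀({y : Y // p y = x}, ℂ), (∀ y, 0 ≤ ζ y) → 0 ≤ φx ζ) ∧
      (∀ (z : C₀(Y, ℂ)) (ζ : C₀({y : Y // p y = x}, ℂ)),
        (∀ y : {y : Y // p y = x}, ζ y = z y.1) → φ z x = φx ζ) := by
  have hFc : IsClosed {y : Y | p y = x} := (isClosed_singleton (x := x)).preimage hp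
  have hext : ∀ ζ : C₀({y : Y // p y = x}, ℂ), ∃ z : C₀(Y, ℂ),
      ∀ y : {y : Y // p y = x}, z y.1 = ζ y := fun ζ => c0_extend hFc ζ
  choose E hE using hext
  have welldef : ∀ z z' : C₀(Y, ℂ),
      (∀ y : {y : Y // p y = x}, z y.1 = z' y.1) → φ z x = φ z' x := by
    intro z z' h
    have hv : φ (z - z') x = 0 := by
      apply key_vanish p hp φ hpos hmod x
      intro y hy
      have := h ⟨y, hy⟩
      simp only [ZeroAtInftyContinuousMap.sub_apply]
      rw [this, sub_self]
    rw [map_sub] at hv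
    simp only [ZeroAtInftyContinuousMap.sub_apply, sub_eq_zero] at hv
    exact hv
  refine ⟨{ toFun := fun ζ => φ (E ζ) x
            map_add' := ?_
            map_smul' := ?_ }, ⟨?_, ?_⟩, ?_⟩
  · intro ζ ζ'
    have h : φ (E (ζ + ζ')) x = φ (E ζ + E ζ') x := by
      apply welldef
      intro y
      simp [hE, hE (ζ + ζ') y, hE ζ y, hE ζ' y]
    show φ (E (ζ + ζ')) x = φ (E ζ) x + φ (E ζ') x
    rw [h, map_add]
    simp
  · intro c ζ
    have h : φ (E (c • ζ)) x = φ (c • E ζ) x := by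
      apply welldef
      intro y
      simp [hE (c • ζ) y, hE ζ y]
    show φ (E (c • ζ)) x = c • φ (E ζ) x
    rw [h, _root_.map_smul]
    simp
  · -- positivity
    intro ζ hζ
    simp only [LinearMap.coe_mk, AddHom.coe_mk]
    set g : ℂ → ℂ := fun w => ((max w.re 0 : ℝ) : ℂ) with hg
    have hc : Continuous g := Complex.continuous_ofReal.comp
      (Complex.continuous_re.max continuous_const)
    have h0 : g 0 = 0 := by simp [hg]
    have heq : φ (E ζ) x = φ (mapZero g hc h0 (E ζ)) x := by
      apply welldef
      intro y
      have h1 := hE ζ y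
      have h2 := hζ y
      rw [Complex.le_def] at h2
      simp only [Complex.zero_re, Complex.zero_im] at h2
      rw [mapZero_apply, h1, hg]
      apply Complex.ext <;> simp [max_eq_left h2.1, h2.2.symm]
    rw [heq]
    apply hpos
    intro y
    simp [hg, Complex.zero_le_real, le_max_right]
  · -- the defining property
    intro z ζ h
    simp only [LinearMap.coe_mk, AddHom.coe_mk]
    apply welldef
    intro y
    rw [hE ζ y, h y]
  · -- uniqueness
    intro ψ ⟨hψpos, hψ⟩
    ext ζ
    simpa using (hψ (E ζ) ζ (fun y => (hE ζ y).symm)).symm
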